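/- Let A, B ⊂ X be nonempty sets and E ⊂ X* a weak*-closed convex cone. Then inf x*(A) ≥ inf x*(B) for all x* ∈ E if and only if A ⊂ cl conv(B + E⁺), where E⁺ = {x ∈ X ∣ x*(x) ≥ 0 for all x* ∈ E}. -/

import Mathlib

open Pointwise

section Aux

variable {X : Type*} [NormedAddCommGroup X] [NormedSpace ℝ X]

/-- Every continuous linear functional on the weak-* dual is evaluation at a point. -/
lemma weakDual_functional_eq_eval (φ : WeakDual ℝ X →L[ℝ] ℝ) :
    ∃ x : X, ∀ f : WeakDual ℝ X, φ f = f x := by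
  have hws := (topDualPairing ℝ X).weakBilin_withSeminorms
  set p := (topDualPairing ℝ X).toSeminormFamily with hp
  set q : Seminorm ℝ (WeakDual ℝ X) := (φ : WeakDual ℝ X →ₗ[ℝ] ℝ).toSeminorm with hq
  have hqc : Continuous q := by
    have : ⇑q = fun f : WeakDual ℝ X => ‖φ f‖ := rfl
    rw [this]
    exact continuous_norm.comp φ.continuous
  obtain ⟨s, C, hC0, hC⟩ := Seminorm.bound_of_continuous hws q hqc
  set L : s → (WeakDual ℝ X →ₗ[ℝ] ℝ) := fun i => (topDualPairing ℝ X).flip (i : X) with hL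
  have hker : ⨅ i : s, LinearMap.ker (L i) ≤
      LinearMap.ker (φ : WeakDual ℝ X →ₗ[ℝ] ℝ) := by
    intro f hf
    rw [Submodule.mem_iInf] at hf
    have hsup : (s.sup p) f = 0 := by
      refine le_antisymm (Seminorm.finset_sup_apply_le le_rfl fun i hi => ?_)
        (apply_nonneg _ _)
      have hfi : f i = 0 := hf ⟨i, hi⟩
      show ‖f i‖ ≤ 0
      simp [hfi]
    have : q f ≤ (C : ℝ) * (s.sup p) f := by
      exact hC f
    rw [hsup, mul_zero] at this
    have hq0 : ‖φ f‖ ≤ 0 := this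
    have : φ f = 0 := by
      have := norm_le_zero_iff.mp hq0
      exact this
    exact this
  have hspan := mem_span_of_iInf_ker_le_ker hker
  obtain ⟨c, hc⟩ := (Submodule.mem_span_range_iff_exists_fun ℝ).1 hspan
  refine ⟨∑ i : s, c i • (i : X), fun f => ?_⟩
  have h1 : ∑ i : s, c i • (L i) f = φ f := by
    have := congrArg (fun K : WeakDual ℝ X →ₗ[ℝ] ℝ => K f) hc
    simpa using this
  have h2 : f (∑ i : s, c i • (i : X)) = ∑ i : s, c i • f (i : X) := by
    rw [map_sum]
    exact Finset.sum_congr rfl fun i _ => map_smul f _ _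
  rw [h2, ← h1]
  rfl

/-- Bipolar-type lemma: if `g` is nonnegative on the positive polar of a weak*-closed
convex cone `E`, then `g ∈ E`. -/
lemma mem_of_nonneg_on_polar (E : Set (WeakDual ℝ X)) (hEcl : IsClosed E)
    (hEconv : Convex ℝ E) (hE0 : (0 : WeakDual ℝ X) ∈ E)
    (hEcone : ∀ t : ℝ, 0 ≤ t → ∀ f ∈ E, t • f ∈ E) {g : WeakDual ℝ X}
    (hg : ∀ x : X, (∀ f ∈ E, 0 ≤ f x) → 0 ≤ g x) : g ∈ E := by
  haveI : LocallyConvexSpace ℝ (WeakDual ℝ X) := WeakBilin.locallyConvexSpace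
  by_contra hgE
  obtain ⟨φ, u, hφg, hφE⟩ := geometric_hahn_banach_point_closed hEconv hEcl hgE
  obtain ⟨x, hx⟩ := weakDual_functional_eq_eval φ
  have hu0 : u < 0 := by
    have := hφE 0 hE0
    simpa using this
  have hEx : ∀ f ∈ E, 0 ≤ f x := by
    intro f hf
    by_contra hneg
    push_neg at hneg
    set t : ℝ := u / f x with ht
    have ht0 : 0 ≤ t := le_of_lt (div_pos_iff.mpr (Or.inr ⟨hu0, hneg⟩))
    have htE := hEcone t ht0 f hf
    have := hφE _ htE
    rw [hx] at this
    have hev : (t • f) x = t * f x := rfl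
    rw [hev, ht, div_mul_cancel₀ u (ne_of_lt hneg)] at this
    exact lt_irrefl u this
  have h0 := hg x hEx
  rw [hx] at hφg
  have : g x < 0 := lt_trans hφg hu0
  linarith

end Aux

/-- For a weak*-closed convex cone `E ⊆ X*`:
`inf x*(A) ≥ inf x*(B)` for all `x* ∈ E` iff `A ⊆ cl conv (B + E⁺)`. -/
theorem inf_ineq_iff_subset_closure
    {X : Type*} [NormedAddCommGroup X] [NormedSpace ℝ X]
    (E : Set (WeakDual ℝ X)) (hEcl : IsClosed E) (hEconv : Convex ℝ E)
    (hE0 : (0 : WeakDual ℝ X) ∈ E)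
    (hEcone : ∀ t : ℝ, 0 ≤ t → ∀ f ∈ E, t • f ∈ E)
    (A B : Set X) (hA : A.Nonempty) (hB : B.Nonempty) :
    (∀ f ∈ E, (⨅ b ∈ B, (f b : EReal)) ≤ ⨅ a ∈ A, (f a : EReal)) ↔
    A ⊆ closure (convexHull ℝ (B + {x : X | ∀ f ∈ E, 0 ≤ f x})) := by
  set K : Set X := {x : X | ∀ f ∈ E, 0 ≤ f x} with hK
  have h0K : (0 : X) ∈ K := fun f _ => by simp
  constructor
  · -- forward: separation + bipolar
    intro hinf a ha
    by_contra hnot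
    set C := closure (convexHull ℝ (B + K)) with hC
    have hCconv : Convex ℝ C := (convex_convexHull ℝ _).closure
    have hCcl : IsClosed C := isClosed_closure
    obtain ⟨g, u, hga, hgC⟩ := geometric_hahn_banach_point_closed hCconv hCcl hnot
    obtain ⟨b₀, hb₀⟩ := hB
    have hBC : ∀ b ∈ B, b ∈ C := fun b hb =>
      subset_closure (subset_convexHull ℝ _ (by
        have : b + 0 ∈ B + K := Set.add_mem_add hb h0K
        simpa using this))
    -- g is nonnegative on K
    have hgK : ∀ k ∈ K, 0 ≤ g k := by
      intro k hk
      by_contra hneg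
      push_neg at hneg
      have hub₀ : u < g b₀ := hgC b₀ (hBC b₀ hb₀)
      set t : ℝ := (u - g b₀) / g k with ht
      have ht0 : 0 ≤ t := le_of_lt (div_pos_iff.mpr (Or.inr ⟨by linarith, hneg⟩))
      have htk : t • k ∈ K := fun f hf => by
        have : f (t • k) = t * f k := map_smul f t k
        rw [this]
        exact mul_nonneg ht0 (hk f hf)
      have hmem : b₀ + t • k ∈ C :=
        subset_closure (subset_convexHull ℝ _ (Set.add_mem_add hb₀ htk))
      have := hgC _ hmem
      rw [map_add] at this
      have hsm : g (t • k) = t * g k := map_smul g t k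
      rw [hsm, ht, div_mul_cancel₀ _ (ne_of_lt hneg)] at this
      linarith
    -- the separating functional, viewed in the weak-* dual, lies in E
    set G : WeakDual ℝ X := g with hG
    have hGE : G ∈ E := mem_of_nonneg_on_polar E hEcl hEconv hE0 hEcone
      (fun x hx => hgK x hx)
    have h1 : (u : EReal) ≤ ⨅ b ∈ B, (G b : EReal) :=
      le_iInf₂ fun b hb => EReal.coe_le_coe_iff.mpr (le_of_lt (hgC b (hBC b hb)))
    have h2 : (⨅ a' ∈ A, (G a' : EReal)) ≤ (G a : EReal) := iInf₂_le a ha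
    have h3 := hinf G hGE
    have : (u : EReal) ≤ (G a : EReal) := le_trans h1 (le_trans h3 h2)
    have : u ≤ g a := EReal.coe_le_coe_iff.mp this
    linarith
  · -- backward
    intro hsub f hf
    set m : EReal := ⨅ b ∈ B, (f b : EReal) with hm
    by_cases hbot : m = ⊥
    · rw [hbot]; exact bot_le
    · obtain ⟨b₀, hb₀⟩ := hB
      have hmle : m ≤ (f b₀ : EReal) := iInf₂_le b₀ hb₀
      have htop : m ≠ ⊤ := ne_top_of_le_ne_top (EReal.coe_ne_top _) hmle
      set r : ℝ := m.toReal with hr'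
      have hr : (r : EReal) = m := EReal.coe_toReal htop hbot
      rw [← hr]
      refine le_iInf₂ fun a ha => ?_
      have haC := hsub ha
      -- the halfspace {x | r ≤ f x} is closed, convex and contains B + K
      have hlin : IsLinearMap ℝ (fun x : X => f x) :=
        ⟨fun x y => map_add f x y, fun c x => map_smul f c x⟩
      have hScl : IsClosed {x : X | r ≤ f x} :=
        isClosed_le continuous_const (map_continuous f)
      have hSconv : Convex ℝ {x : X | r ≤ f x} := convex_halfSpace_ge hlin r
      have hBK : B + K ⊆ {x : X | r ≤ f x} := by
        rintro _ ⟨b, hb, k, hk, rfl⟩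
        have h1 : (r : EReal) ≤ (f b : EReal) := hr ▸ hm ▸ iInf₂_le b hb
        have h1' : r ≤ f b := EReal.coe_le_coe_iff.mp h1
        have h2 : 0 ≤ f k := hk f hf
        have : f (b + k) = f b + f k := map_add f b k
        simp only [Set.mem_setOf_eq, this]
        linarith
      have : a ∈ {x : X | r ≤ f x} :=
        closure_minimal (convexHull_min hBK hSconv) hScl haC
      exact EReal.coe_le_coe_iff.mpr this
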